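/- (Perturbing the data exponent slows the decay of the finite-size collapse error.) Let m ≥ 2 and let (μ_i, ν_i), i = 1,…,m, be pairwise distinct pairs with μ_i, ν_i ≥ 0. Fix γ > 0 and set β_i(γ') = μ_i·γ' + ν_i for γ' ∈ ℝ. Suppose the minimum of {β_i(γ)} is attained at exactly the indices 1,…,k with k ≥ 2 (a tie), and define the gap ε(γ') = inf{ β_i(γ') − min_j β_j(γ') : β_i(γ') > min_j β_j(γ') } (with ε(γ') = +∞ when all β_i(γ') are equal). Then ε(γ) = β_{k+1}(γ) − β₁(γ) > 0 when k < m (and ε(γ) = +∞ when k = m), and there exist δ₀ > 0 and C > 0 such that for every δ with 0 < |δ| < δ₀, ε(γ + δ) ≤ C·|δ|; in particular ε(γ + δ) < ε(γ) for all sufficiently small δ ≠ 0. -/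

import Mathlib

/-- **Perturbing the data exponent slows the decay of the finite-size collapse error.**
For pairwise distinct pairs `(μᵢ, νᵢ)` and total exponents `βᵢ(γ') = μᵢ·γ' + νᵢ` whose
minimum at `γ' = γ` is attained exactly at the first `k ≥ 2` indices (a tie), the gap
`ε(γ')` (the distance from the smallest to the second-smallest distinct value, `+∞` if all
equal) satisfies: `ε(γ) = β_k(γ) − β₀(γ) > 0` when `k < m` and `ε(γ) = ⊤` when `k = m`;
and there are `δ₀, C > 0` with `ε(γ+δ) ≤ C·|δ| < ε(γ)` for all `0 < |δ| < δ₀`. -/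
theorem stmt_10
    (n k : ℕ) (hk2 : 2 ≤ k) (hkm : k ≤ n + 2)
    (μ ν : Fin (n + 2) → ℝ) (hμ : ∀ i, 0 ≤ μ i) (hν : ∀ i, 0 ≤ ν i)
    (hdistinct : Function.Injective (fun i => (μ i, ν i)))
    (γ : ℝ) (hγ : 0 < γ)
    (βmin : ℝ → ℝ)
    (hβmin : ∀ γ' : ℝ, βmin γ' =
      Finset.univ.inf' Finset.univ_nonempty (fun j : Fin (n + 2) => μ j * γ' + ν j))
    (ε : ℝ → EReal)
    (hε : ∀ γ' : ℝ, ε γ' = sInf {e : EReal | ∃ i : Fin (n + 2),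
      βmin γ' < μ i * γ' + ν i ∧ e = ((μ i * γ' + ν i - βmin γ' : ℝ) : EReal)})
    (hmono : Monotone (fun i : Fin (n + 2) => μ i * γ + ν i))
    (htie : ∀ i : Fin (n + 2), μ i * γ + ν i = βmin γ ↔ i.val < k) :
    (∀ h : k < n + 2, ε γ =
        ((μ ⟨k, h⟩ * γ + ν ⟨k, h⟩ - (μ 0 * γ + ν 0) : ℝ) : EReal) ∧
        (0 : ℝ) < μ ⟨k, h⟩ * γ + ν ⟨k, h⟩ - (μ 0 * γ + ν 0)) ∧
    (k = n + 2 → ε γ = ⊤) ∧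
    (∃ δ₀ : ℝ, 0 < δ₀ ∧ ∃ C : ℝ, 0 < C ∧ ∀ δ : ℝ, δ ≠ 0 → |δ| < δ₀ →
      ε (γ + δ) ≤ ((C * |δ| : ℝ) : EReal) ∧ ε (γ + δ) < ε γ) := by
  have hβle : ∀ (γ' : ℝ) (i : Fin (n + 2)), βmin γ' ≤ μ i * γ' + ν i := by
    intro γ' i
    rw [hβmin]
    exact Finset.inf'_le _ (Finset.mem_univ i)
  have h0val : ((0 : Fin (n + 2)) : ℕ) < k := by
    simp only [Fin.val_zero]; omega
  have h1val : ((1 : Fin (n + 2)) : ℕ) < k := by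
    simp only [Fin.val_one]; omega
  have hβ0 : μ 0 * γ + ν 0 = βmin γ := (htie 0).mpr h0val
  have hβ1 : μ 1 * γ + ν 1 = βmin γ := (htie 1).mpr h1val
  -- Part 1
  have part1 : ∀ h : k < n + 2, ε γ =
        ((μ ⟨k, h⟩ * γ + ν ⟨k, h⟩ - (μ 0 * γ + ν 0) : ℝ) : EReal) ∧
        (0 : ℝ) < μ ⟨k, h⟩ * γ + ν ⟨k, h⟩ - (μ 0 * γ + ν 0) := by
    intro h
    set i0 : Fin (n + 2) := ⟨k, h⟩ with hi0
    have hgt : βmin γ < μ i0 * γ + ν i0 := by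
      rcases lt_or_eq_of_le (hβle γ i0) with h' | h'
      · exact h'
      · exfalso
        have := (htie i0).mp h'.symm
        simp [hi0] at this
    constructor
    · rw [hε]
      apply le_antisymm
      · apply sInf_le
        refine ⟨i0, hgt, ?_⟩
        rw [hβ0]
      · apply le_sInf
        rintro e ⟨i, hi, rfl⟩
        rw [EReal.coe_le_coe_iff]
        have hik : ¬ (i.val < k) := fun hc => absurd ((htie i).mpr hc) (ne_of_gt hi)
        have hle : μ i0 * γ + ν i0 ≤ μ i * γ + ν i := by
          apply hmono
          rw [Fin.le_def]
          simpa [hi0] using Nat.le_of_not_lt hik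
        rw [hβ0]
        linarith
    · rw [hβ0]
      linarith
  refine ⟨part1, ?_, ?_⟩
  · -- Part 2
    intro hkeq
    rw [hε]
    convert sInf_empty
    · rfl
    rw [Set.eq_empty_iff_forall_notMem]
    rintro e ⟨i, hi, rfl⟩
    have : μ i * γ + ν i = βmin γ := (htie i).mpr (by omega)
    linarith
  · -- Part 3
    set Mx : ℝ := Finset.univ.sup' Finset.univ_nonempty μ with hMx
    have hMx0 : 0 ≤ Mx := le_trans (hμ 0) (Finset.le_sup' μ (Finset.mem_univ 0))
    have hMxle : ∀ i, μ i ≤ Mx := fun i => Finset.le_sup' μ (Finset.mem_univ i)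
    set C : ℝ := 2 * Mx + 1 with hC
    have hC0 : (0 : ℝ) < C := by positivity
    have hμ01 : μ 0 ≠ μ 1 := by
      intro hμeq
      have hνeq : ν 0 = ν 1 := by
        have := hβ0.trans hβ1.symm
        nlinarith [this, hμeq]
      have : (0 : Fin (n + 2)) = 1 := hdistinct (by simp [hμeq, hνeq])
      simp at this
    -- key bound
    have hub : ∀ δ : ℝ, δ ≠ 0 → ε (γ + δ) ≤ ((C * |δ| : ℝ) : EReal) := by
      intro δ hδ
      have hne : μ 0 * δ ≠ μ 1 * δ := fun h => hμ01 (mul_right_cancel₀ hδ h)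
      obtain ⟨i, j, hβi, hβj, hlt⟩ : ∃ i j : Fin (n + 2),
          μ i * γ + ν i = βmin γ ∧ μ j * γ + ν j = βmin γ ∧ μ j * δ < μ i * δ := by
        rcases hne.lt_or_gt with h | h
        · exact ⟨1, 0, hβ1, hβ0, h⟩
        · exact ⟨0, 1, hβ0, hβ1, h⟩
      have hlow : βmin γ - Mx * |δ| ≤ βmin (γ + δ) := by
        rw [hβmin (γ + δ)]
        apply Finset.le_inf'
        intro j' _
        have h1 : βmin γ ≤ μ j' * γ + ν j' := hβle γ j'
        have h2 : -(Mx * |δ|) ≤ μ j' * δ := by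
          have habs : |μ j' * δ| ≤ Mx * |δ| := by
            rw [abs_mul, abs_of_nonneg (hμ j')]
            exact mul_le_mul_of_nonneg_right (hMxle j') (abs_nonneg δ)
          linarith [neg_abs_le (μ j' * δ)]
        nlinarith
      have hstrict : βmin (γ + δ) < μ i * (γ + δ) + ν i := by
        have hjle : βmin (γ + δ) ≤ μ j * (γ + δ) + ν j := hβle _ j
        nlinarith
      have hup : μ i * (γ + δ) + ν i ≤ βmin γ + Mx * |δ| := by
        have h2 : μ i * δ ≤ Mx * |δ| := by
          calc μ i * δ ≤ |μ i * δ| := le_abs_self _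
            _ = μ i * |δ| := by rw [abs_mul, abs_of_nonneg (hμ i)]
            _ ≤ Mx * |δ| := mul_le_mul_of_nonneg_right (hMxle i) (abs_nonneg δ)
        nlinarith
      rw [hε]
      calc sInf {e : EReal | ∃ i' : Fin (n + 2),
            βmin (γ + δ) < μ i' * (γ + δ) + ν i' ∧
            e = ((μ i' * (γ + δ) + ν i' - βmin (γ + δ) : ℝ) : EReal)}
          ≤ ((μ i * (γ + δ) + ν i - βmin (γ + δ) : ℝ) : EReal) :=
            sInf_le ⟨i, hstrict, rfl⟩
        _ ≤ ((C * |δ| : ℝ) : EReal) := by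
            rw [EReal.coe_le_coe_iff]
            have h3 : (0 : ℝ) ≤ |δ| := abs_nonneg δ
            nlinarith
    by_cases h : k < n + 2
    · obtain ⟨hεγ, hg0⟩ := part1 h
      set g : ℝ := μ ⟨k, h⟩ * γ + ν ⟨k, h⟩ - (μ 0 * γ + ν 0) with hg
      refine ⟨g / (2 * C), by positivity, C, hC0, fun δ hδ hδ0 => ?_⟩
      refine ⟨hub δ hδ, lt_of_le_of_lt (hub δ hδ) ?_⟩
      rw [hεγ, EReal.coe_lt_coe_iff]
      have h3 : (0 : ℝ) ≤ |δ| := abs_nonneg δ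
      have : C * |δ| < C * (g / (2 * C)) := by
        apply mul_lt_mul_of_pos_left hδ0 hC0
      rw [mul_div_assoc'] at this
      have hCg : C * g / (2 * C) = g / 2 := by
        field_simp
      rw [hCg] at this
      exact this.trans (half_lt_self hg0)
    · have hkeq : k = n + 2 := by omega
      have hεtop : ε γ = ⊤ := by
        rw [hε]
        convert sInf_empty
        · rfl
        rw [Set.eq_empty_iff_forall_notMem]
        rintro e ⟨i, hi, rfl⟩
        have : μ i * γ + ν i = βmin γ := (htie i).mpr (by omega)
        linarith
      refine ⟨1, one_pos, C, hC0, fun δ hδ hδ0 => ?_⟩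
      refine ⟨hub δ hδ, lt_of_le_of_lt (hub δ hδ) ?_⟩
      rw [hεtop]
      exact EReal.coe_lt_top _
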